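/- Let A be an n×n row-stochastic real matrix whose first row is (1, 0, …, 0), with aᵢᵢ > 0 for all i, and let Ã denote the (n−1)×(n−1) lower-right submatrix. Assume Ã is substochastic and irreducible with at least one row of Ã summing to strictly less than 1. Let X_t = A X_{t−1} with X₁ ∈ ℝⁿ whose first coordinate equals σ̄. Then consensus to σ̄ is reached exponentially: for every r with ρ(Ã) < r < 1 there exists a constant C > 0 such that max_i |x_tⁱ − σ̄| ≤ C · r^{t−1} · ‖X₁ − σ̄ 𝟏ₙ‖_∞ for all t ≥ 1, where ρ(Ã) < 1 is the spectral radius of Ã. -/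

import Mathlib

/-- The vector infinity norm: maximum absolute value of the entries. -/
noncomputable def vecInfNorm {ι : Type*} [Fintype ι] (v : ι → ℝ) : ℝ :=
  ⨆ i, |v i|

/-- The spectral radius of a real square matrix: the maximum of the absolute
values of its complex eigenvalues (as a real number). -/
noncomputable def matSpectralRadius {n : ℕ} (M : Matrix (Fin n) (Fin n) ℝ) : ℝ :=
  (spectralRadius ℂ (M.map (Complex.ofReal ·))).toReal

open scoped ENNReal NNReal
open Filter

section
variable {n : ℕ} (M : Matrix (Fin n) (Fin n) ℝ)

lemma pow_entry_nonneg (hnn : ∀ i j, 0 ≤ M i j) :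
    ∀ t i j, 0 ≤ (M ^ t) i j := by
  intro t
  induction t with
  | zero => intro i j; simp [Matrix.one_apply]; positivity
  | succ t ih =>
    intro i j
    rw [pow_succ, Matrix.mul_apply]
    exact Finset.sum_nonneg fun k _ => mul_nonneg (ih i k) (hnn k j)

lemma rowsum_add (s t : ℕ) (i : Fin n) :
    ∑ j, (M ^ (s + t)) i j = ∑ k, (M ^ s) i k * ∑ j, (M ^ t) k j := by
  rw [pow_add]
  simp_rw [Matrix.mul_apply, Finset.mul_sum]
  rw [Finset.sum_comm]

lemma rowsum_pow_le_one (hnn : ∀ i j, 0 ≤ M i j) (hrow : ∀ i, ∑ j, M i j ≤ 1) :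
    ∀ t i, ∑ j, (M ^ t) i j ≤ 1 := by
  intro t
  induction t with
  | zero => intro i; simp [Matrix.one_apply]
  | succ t ih =>
    intro i
    rw [show t + 1 = 1 + t by omega, rowsum_add]
    calc ∑ k, (M ^ 1) i k * ∑ j, (M ^ t) k j ≤ ∑ k, (M ^ 1) i k * 1 := by
          refine Finset.sum_le_sum fun k _ => ?_
          exact mul_le_mul_of_nonneg_left (ih k) (by simpa using hnn i k)
      _ ≤ 1 := by simpa [pow_one] using hrow i

lemma rowsum_antitone (hnn : ∀ i j, 0 ≤ M i j) (hrow : ∀ i, ∑ j, M i j ≤ 1)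
    (i : Fin n) : Antitone fun t => ∑ j, (M ^ t) i j := by
  have key : ∀ t i, ∑ j, (M ^ (t + 1)) i j ≤ ∑ j, (M ^ t) i j := by
    intro t
    induction t with
    | zero => intro i; simpa [Matrix.one_apply] using rowsum_pow_le_one M hnn hrow 1 i
    | succ t ih =>
      intro i
      rw [show t + 1 + 1 = 1 + (t + 1) by omega, show t + 1 = 1 + t by omega,
        rowsum_add, rowsum_add]
      refine Finset.sum_le_sum fun k _ => ?_
      have h1t : (1 : ℕ) + t = t + 1 := by omega
      refine mul_le_mul_of_nonneg_left ?_ (by simpa using hnn i k)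
      simpa [h1t] using ih k
  exact antitone_nat_of_succ_le fun t => key t i

lemma rowsum_strict (hnn : ∀ i j, 0 ≤ M i j) (hrow : ∀ i, ∑ j, M i j ≤ 1)
    {k : Fin n} (hk : ∑ j, M k j < 1) {i : Fin n} {m : ℕ}
    (hm : 0 < (M ^ m) i k) : ∑ j, (M ^ (m + 1)) i j < 1 := by
  rw [rowsum_add]
  calc ∑ k', (M ^ m) i k' * ∑ j, (M ^ 1) k' j
      < ∑ k', (M ^ m) i k' * 1 := by
        refine Finset.sum_lt_sum (fun k' _ => ?_) ⟨k, Finset.mem_univ k, ?_⟩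
        · exact mul_le_mul_of_nonneg_left (by simpa [pow_one] using hrow k')
            (pow_entry_nonneg M hnn m i k')
        · have : ∑ j, (M ^ 1) k j < 1 := by simpa [pow_one] using hk
          exact mul_lt_mul_of_pos_left this hm
    _ ≤ 1 := by simpa using rowsum_pow_le_one M hnn hrow m i
end

section Analytic
attribute [local instance] Matrix.linftyOpNormedRing Matrix.linftyOpNormedAlgebra
variable {n : ℕ}
local instance : CompleteSpace (Matrix (Fin n) (Fin n) ℂ) :=
  (inferInstance : CompleteSpace (Fin n → Fin n → ℂ))

lemma rowsum_le_norm (M : Matrix (Fin n) (Fin n) ℝ) (h : ∀ i j, 0 ≤ M i j) (i : Fin n) :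
    ∑ j, M i j ≤ ‖M‖ := by
  rw [Matrix.linfty_opNorm_def]
  calc ∑ j, M i j = ((∑ j, ‖M i j‖₊ : ℝ≥0) : ℝ) := by
        push_cast
        exact Finset.sum_congr rfl fun j _ => by
          rw [Real.norm_eq_abs, abs_of_nonneg (h i j)]
    _ ≤ _ := NNReal.coe_mono (Finset.le_sup (f := fun i => ∑ j, ‖M i j‖₊) (Finset.mem_univ i))

lemma map_complex_pow (M : Matrix (Fin n) (Fin n) ℝ) (t : ℕ) :
    (M.map (Complex.ofReal ·)) ^ t = (M ^ t).map (Complex.ofReal ·) := by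
  have h : ∀ P : Matrix (Fin n) (Fin n) ℝ, P.map (Complex.ofReal ·) =
      Complex.ofRealHom.mapMatrix P := fun P => rfl
  rw [h, h, ← map_pow]

lemma nnnorm_map_complex (M : Matrix (Fin n) (Fin n) ℝ) :
    ‖M.map (Complex.ofReal ·)‖₊ = ‖M‖₊ := by
  simp [Matrix.linfty_opNNNorm_def, Matrix.map_apply]

lemma key (M : Matrix (Fin n) (Fin n) ℝ)
    (hnn : ∀ i j, 0 ≤ M i j) (hrow : ∀ i, ∑ j, M i j ≤ 1)
    (hstrict : ∃ i, ∑ j, M i j < 1)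
    (hirr : ∀ i j, ∃ t : ℕ, 0 < t ∧ 0 < (M ^ t) i j) :
    matSpectralRadius M < 1 ∧ ∀ r : ℝ, matSpectralRadius M < r → r < 1 →
      ∃ C : ℝ, 0 < C ∧ ∀ (t : ℕ) (i : Fin n), ∑ j, (M ^ t) i j ≤ C * r ^ t := by
  obtain ⟨k₀, hk₀⟩ := hstrict
  haveI : Nonempty (Fin n) := ⟨k₀⟩
  choose m hm hmk using fun i => hirr i k₀
  obtain ⟨T, hT1, hTlt⟩ : ∃ T : ℕ, 1 ≤ T ∧ ∀ i, ∑ j, (M ^ T) i j < 1 := by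
    refine ⟨Finset.univ.sup fun i => m i + 1,
      le_trans (by omega : 1 ≤ m k₀ + 1)
        (Finset.le_sup (f := fun i => m i + 1) (Finset.mem_univ k₀)), fun i => ?_⟩
    have h1 : ∑ j, (M ^ (m i + 1)) i j < 1 := rowsum_strict M hnn hrow hk₀ (hmk i)
    have h2 : m i + 1 ≤ Finset.univ.sup fun i => m i + 1 :=
      Finset.le_sup (f := fun i => m i + 1) (Finset.mem_univ i)
    exact lt_of_le_of_lt (rowsum_antitone M hnn hrow i h2) h1
  have hnormT : ‖M ^ T‖₊ < 1 := by
    rw [Matrix.linfty_opNNNorm_def]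
    refine (Finset.sup_lt_iff (by norm_num : (⊥ : ℝ≥0) < 1)).mpr fun i _ => ?_
    rw [← NNReal.coe_lt_coe]
    push_cast
    calc ∑ j, ‖(M ^ T) i j‖ = ∑ j, (M ^ T) i j := by
          exact Finset.sum_congr rfl fun j _ => by
            rw [Real.norm_eq_abs, abs_of_nonneg (pow_entry_nonneg M hnn T i j)]
      _ < 1 := hTlt i
  set B := M.map (Complex.ofReal ·) with hB
  have hBn : ∀ t : ℕ, ‖B ^ t‖₊ = ‖M ^ t‖₊ := by
    intro t; rw [map_complex_pow, nnnorm_map_complex]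
  have hρ_ne : spectralRadius ℂ B ≠ ⊤ :=
    ((spectrum.spectralRadius_le_nnnorm (𝕜 := ℂ) (a := B)).trans_lt ENNReal.coe_lt_top).ne
  have hρ1 : spectralRadius ℂ B < 1 := by
    obtain ⟨s, rfl⟩ : ∃ s, T = s + 1 := ⟨T - 1, by omega⟩
    have h := spectrum.spectralRadius_le_pow_nnnorm_pow_one_div ℂ B s
    rw [nnnorm_one] at h
    simp only [ENNReal.coe_one, ENNReal.one_rpow, mul_one] at h
    refine lt_of_le_of_lt h ?_
    refine ENNReal.rpow_lt_one ?_ (by positivity)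
    rw [hBn]
    exact_mod_cast hnormT
  have hρtoReal : matSpectralRadius M < 1 := by
    have : matSpectralRadius M = (spectralRadius ℂ B).toReal := rfl
    rw [this]
    exact ENNReal.toReal_lt_of_lt_ofReal (by simpa [ENNReal.ofReal_one] using hρ1)
  refine ⟨hρtoReal, fun r hr1 hr2 => ?_⟩
  have hr0 : 0 < r := lt_of_le_of_lt ENNReal.toReal_nonneg hr1
  have hρr : spectralRadius ℂ B < ENNReal.ofReal r :=
    (ENNReal.lt_ofReal_iff_toReal_lt hρ_ne).mpr hr1
  have gel := spectrum.pow_nnnorm_pow_one_div_tendsto_nhds_spectralRadius B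
  obtain ⟨N, hN⟩ := eventually_atTop.mp (gel.eventually_lt_const hρr)
  have hbig : ∀ t : ℕ, N + 1 ≤ t → ‖M ^ t‖ ≤ r ^ t := by
    intro t ht
    have htpos : (0:ℝ) < t := by exact_mod_cast (by omega : 0 < t)
    have h1 := hN t (by omega)
    have h2 := ENNReal.rpow_lt_rpow h1 htpos
    rw [← ENNReal.rpow_mul,
      one_div, inv_mul_cancel₀ htpos.ne', ENNReal.rpow_one,
      ENNReal.rpow_natCast, ← ENNReal.ofReal_pow hr0.le, hBn,
      ← ENNReal.ofReal_coe_nnreal, coe_nnnorm] at h2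
    exact ((ENNReal.ofReal_lt_ofReal_iff_of_nonneg (norm_nonneg _)).mp h2).le
  set C : ℝ := 1 + ∑ t ∈ Finset.range (N + 1), ‖M ^ t‖ / r ^ t with hC
  have term_nonneg : ∀ t ∈ Finset.range (N + 1), 0 ≤ ‖M ^ t‖ / r ^ t := fun t _ =>
    div_nonneg (norm_nonneg _) (by positivity)
  have hCpos : 0 < C :=
    add_pos_of_pos_of_nonneg one_pos (Finset.sum_nonneg term_nonneg)
  have hC1 : 1 ≤ C := le_add_of_nonneg_right (Finset.sum_nonneg term_nonneg)
  refine ⟨C, hCpos, fun t i => ?_⟩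
  have hnormle : ‖M ^ t‖ ≤ C * r ^ t := by
    rcases le_or_gt t N with h | h
    · have hmem : t ∈ Finset.range (N + 1) := Finset.mem_range.mpr (by omega)
      have h1 : ‖M ^ t‖ / r ^ t ≤ C := le_add_of_nonneg_left one_pos.le |>.trans' <|
        Finset.single_le_sum term_nonneg hmem
      calc ‖M ^ t‖ = (‖M ^ t‖ / r ^ t) * r ^ t := by
            field_simp
        _ ≤ C * r ^ t := mul_le_mul_of_nonneg_right h1 (by positivity)
    · exact (hbig t (by omega)).trans (le_mul_of_one_le_left (by positivity) hC1)
  exact (rowsum_le_norm (M ^ t) (pow_entry_nonneg M hnn t) i).trans hnormle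

end Analytic



/-- **Corollary 2: exponential consensus with an unknown leader.**
Under the hypotheses of Theorem 2, `ρ(Ã) < 1` and for every rate `r` with
`ρ(Ã) < r < 1` there is `C > 0` such that
`max_i |x_tⁱ − σ̄| ≤ C · r^{t−1} · ‖X₁ − σ̄𝟏ₙ‖_∞` (indices shifted so that the
initial condition is `X 0`). -/
theorem exponential_consensus_with_leader_scalar
    {n : ℕ} (A : Matrix (Fin (n + 1)) (Fin (n + 1)) ℝ)
    (hA_nonneg : ∀ i j, 0 ≤ A i j)
    (hA_row : ∀ i, ∑ j, A i j = 1)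
    (hA_diag : ∀ i, 0 < A i i)
    (hA_leader₁ : A 0 0 = 1) (hA_leader₂ : ∀ j, j ≠ 0 → A 0 j = 0)
    (Atil : Matrix (Fin n) (Fin n) ℝ)
    (hAtil : ∀ i j, Atil i j = A i.succ j.succ)
    (hsub_nonneg : ∀ i j, 0 ≤ Atil i j)
    (hsub_row : ∀ i, ∑ j, Atil i j ≤ 1)
    (hsub_strict : ∃ i, ∑ j, Atil i j < 1)
    (hirr : ∀ i j, ∃ t : ℕ, 0 < t ∧ 0 < (Atil ^ t) i j)
    (σ : ℝ) (X : ℕ → Fin (n + 1) → ℝ)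
    (hX : ∀ t, X (t + 1) = A.mulVec (X t))
    (hX₀ : X 0 0 = σ) :
    matSpectralRadius Atil < 1 ∧
      ∀ r : ℝ, matSpectralRadius Atil < r → r < 1 →
        ∃ C : ℝ, 0 < C ∧
          ∀ t : ℕ, ∀ i, |X t i - σ| ≤
            C * r ^ t * vecInfNorm (X 0 - (fun _ => σ)) := by
  obtain ⟨hρ, hkey⟩ := key Atil hsub_nonneg hsub_row hsub_strict hirr
  refine ⟨hρ, fun r hr1 hr2 => ?_⟩
  obtain ⟨C, hCpos, hCbound⟩ := hkey r hr1 hr2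
  have hr0 : 0 < r := lt_of_le_of_lt ENNReal.toReal_nonneg hr1
  -- the error vector
  set V : ℝ := vecInfNorm (X 0 - (fun _ => σ)) with hVdef
  have hVle : ∀ i, |X 0 i - σ| ≤ V := by
    intro i
    have h := le_ciSup (f := fun i => |(X 0 - (fun _ => σ) : Fin (n + 1) → ℝ) i|)
      (Set.Finite.bddAbove (Set.finite_range _)) i
    exact h
  have hVnn : 0 ≤ V := le_trans (abs_nonneg _) (hVle 0)
  -- first coordinate stays at σ
  have he0 : ∀ t, X t 0 - σ = 0 := by
    intro t
    induction t with
    | zero => simp [hX₀]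
    | succ t ih =>
      rw [hX t]
      have : A.mulVec (X t) 0 = X t 0 := by
        rw [Matrix.mulVec, dotProduct]
        rw [Finset.sum_eq_single 0 (fun j _ hj => by rw [hA_leader₂ j hj, zero_mul])
          (by simp)]
        rw [hA_leader₁, one_mul]
      rw [this]
      exact ih
  -- recursion for the tail
  have hrec : ∀ (t : ℕ) (j : Fin n),
      X (t + 1) j.succ - σ = ∑ k : Fin n, Atil j k * (X t k.succ - σ) := by
    intro t j
    rw [hX t]
    have h1 : A.mulVec (X t) j.succ = ∑ k, A j.succ k * X t k := rfl
    have h2 : (σ : ℝ) = ∑ k, A j.succ k * σ := by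
      rw [← Finset.sum_mul, hA_row j.succ, one_mul]
    calc A.mulVec (X t) j.succ - σ = ∑ k, A j.succ k * (X t k - σ) := by
          rw [h1]
          nth_rewrite 1 [h2]
          rw [← Finset.sum_sub_distrib]
          exact Finset.sum_congr rfl fun k _ => by ring
      _ = ∑ k : Fin n, Atil j k * (X t k.succ - σ) := by
          rw [Fin.sum_univ_succ, he0 t, mul_zero, zero_add]
          exact Finset.sum_congr rfl fun k _ => by rw [hAtil]
  -- closed form
  have hpow : ∀ (t : ℕ) (j : Fin n),
      X t j.succ - σ = ∑ k : Fin n, (Atil ^ t) j k * (X 0 k.succ - σ) := by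
    intro t
    induction t with
    | zero => intro j; simp [Matrix.one_apply]
    | succ t ih =>
      intro j
      rw [hrec t j]
      have : ∀ k, X t k.succ - σ = ∑ l : Fin n, (Atil ^ t) k l * (X 0 l.succ - σ) :=
        fun k => ih k
      simp_rw [this, Finset.mul_sum]
      rw [Finset.sum_comm]
      refine Finset.sum_congr rfl fun l _ => ?_
      rw [pow_succ', Matrix.mul_apply, Finset.sum_mul]
      exact Finset.sum_congr rfl fun k _ => by ring
  refine ⟨C, hCpos, fun t i => ?_⟩
  refine Fin.cases ?_ (fun j => ?_) i
  · rw [he0 t, abs_zero]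
    positivity
  · rw [hpow t j]
    calc |∑ k : Fin n, (Atil ^ t) j k * (X 0 k.succ - σ)|
        ≤ ∑ k : Fin n, |(Atil ^ t) j k * (X 0 k.succ - σ)| :=
          Finset.abs_sum_le_sum_abs _ _
      _ ≤ ∑ k : Fin n, (Atil ^ t) j k * V := by
          refine Finset.sum_le_sum fun k _ => ?_
          rw [abs_mul, abs_of_nonneg (pow_entry_nonneg Atil hsub_nonneg t j k)]
          exact mul_le_mul_of_nonneg_left (hVle k.succ)
            (pow_entry_nonneg Atil hsub_nonneg t j k)
      _ = (∑ k : Fin n, (Atil ^ t) j k) * V := by rw [Finset.sum_mul]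
      _ ≤ C * r ^ t * V :=
          mul_le_mul_of_nonneg_right (hCbound t j) hVnn
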